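/- Let G be an oriented acyclic finite graph arising from the W₁-orientation w.r.t. finitely supported f₀, f₁, let m : E(G) → ℝ₊* satisfy ∇m(x) = 0 for x ∉ A ∪ B, extended multiplicatively to ordered tuples, and let a,b : G → ℝ₊ be nonnegative. Define f_t(z) = Σ_{x ≤ z ≤ y} [m(x,y)/d(x,y)!] a(x) b(y) Bin_{(x,y),t}(z), where Bin_{(x,y),t}(z) = [m(x,z,y)/m(x,y)] · [d(x,y)!/(d(x,z)! d(z,y)!)] · t^{d(x,z)}(1−t)^{d(z,y)}. Then setting g_t(x₀x₁) = m(x₀,x₁)P_t(x₀)Q_{1−t}(x₁) and h_t(x₀x₁x₂) = m(x₀,x₁,x₂)P_t(x₀)Q_{1−t}(x₂), with P_t(z) = (1/m(z))Σ_{x≤z} m(x,z)a(x)t^{d(x,z)}/d(x,z)! and Q_t(z) = (1/m(z))Σ_{y≥z} m(z,y)b(y)t^{d(z,y)}/d(z,y)!, the triple (f_t,g_t,h_t) satisfies: f_t(z) = m(z)P_t(z)Q_{1−t}(z), ∂f_t/∂t = −∇g_t, ∂g_t/∂t = −∇h_t, and the Benamou-Brenier equation f_t(x₁)h_t(x₀x₁x₂)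 = g_t(x₀x₁)g_t(x₁x₂). -/

import Mathlib

open scoped BigOperators Classical

noncomputable section

theorem binomial_mixture_is_W1plus_geodesic
    {V : Type*} [Fintype V] (R : V → V → Prop)
    -- the partial order x ≤ y: existence of an oriented path from x to y
    (lle : V → V → Prop) (hlle : ∀ x y, lle x y ↔ Relation.ReflTransGen R x y)
    -- the graph distance along the orientation (all oriented paths are geodesics)
    (dd : V → V → ℕ)
    (hdd : ∀ (γ : ℕ → V) (n : ℕ), (∀ i < n, R (γ i) (γ (i + 1))) → dd (γ 0) (γ n) = n)
    -- m on oriented edges, positive, with zero divergence outside sources and sinks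
    (me : V → V → ℝ) (hme : ∀ x y, R x y → 0 < me x y)
    (m1 : V → ℝ) (hm1pos : ∀ x, 0 < m1 x)
    (hm1out : ∀ x, (∃ y, R x y) → m1 x = ∑ y, if R x y then me x y else 0)
    (hm1in : ∀ x, (∃ z, R z x) → m1 x = ∑ z, if R z x then me z x else 0)
    -- the multiplicative extension of m to ordered pairs and triples
    (m2 : V → V → ℝ) (m3 : V → V → V → ℝ)
    (hm2edge : ∀ x y, R x y → m2 x y = me x y)
    (hm2self : ∀ x, m2 x x = m1 x)
    (hm2pos : ∀ x y, lle x y → 0 < m2 x y)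
    (hchain : ∀ x z y, lle x z → lle z y → m1 z * m3 x z y = m2 x z * m2 z y)
    (hdecompL : ∀ x z, lle x z → x ≠ z →
      m2 x z = ∑ z₀, if R z₀ z ∧ lle x z₀ then m2 x z₀ * me z₀ z / m1 z₀ else 0)
    (hdecompR : ∀ z y, lle z y → z ≠ y →
      m2 z y = ∑ z₁, if R z z₁ ∧ lle z₁ y then me z z₁ * m2 z₁ y / m1 z₁ else 0)
    -- the nonnegative weights a, b
    (a b : V → ℝ) (ha : ∀ x, 0 ≤ a x) (hb : ∀ y, 0 ≤ b y)
    -- the functions P and Q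
    (P Q : ℝ → V → ℝ)
    (hP : ∀ t z, P t z = (1 / m1 z) *
      ∑ x, if lle x z then m2 x z * a x * t ^ (dd x z) / ((dd x z).factorial : ℝ) else 0)
    (hQ : ∀ t z, Q t z = (1 / m1 z) *
      ∑ y, if lle z y then m2 z y * b y * t ^ (dd z y) / ((dd z y).factorial : ℝ) else 0)
    -- the mixture of binomial distributions f_t
    (f : ℝ → V → ℝ)
    (hf : ∀ t z, f t z = ∑ x, ∑ y,
      if lle x z ∧ lle z y then
        (m2 x y / ((dd x y).factorial : ℝ)) * a x * b y *
          ((m3 x z y / m2 x y) *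
            (((dd x y).factorial : ℝ) / (((dd x z).factorial : ℝ) * ((dd z y).factorial : ℝ))) *
            t ^ (dd x z) * (1 - t) ^ (dd z y))
      else 0)
    -- the flux g and the field h on triples
    (g : ℝ → V → V → ℝ)
    (hg : ∀ t x₀ x₁, g t x₀ x₁ = m2 x₀ x₁ * P t x₀ * Q (1 - t) x₁)
    (h : ℝ → V → V → V → ℝ)
    (hh : ∀ t x₀ x₁ x₂, h t x₀ x₁ x₂ = m3 x₀ x₁ x₂ * P t x₀ * Q (1 - t) x₂) :
    (∀ t z, f t z = m1 z * P t z * Q (1 - t) z) ∧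
    (∀ t z, HasDerivAt (fun s => f s z)
      (-((∑ y, if R z y then g t z y else 0) - ∑ x, if R x z then g t x z else 0)) t) ∧
    (∀ t x₀ x₁, R x₀ x₁ → HasDerivAt (fun s => g s x₀ x₁)
      (-((∑ x₂, if R x₁ x₂ then h t x₀ x₁ x₂ else 0) -
          ∑ z, if R z x₀ then h t z x₀ x₁ else 0)) t) ∧
    (∀ t x₀ x₁ x₂, R x₀ x₁ → R x₁ x₂ →
      f t x₁ * h t x₀ x₁ x₂ = g t x₀ x₁ * g t x₁ x₂) := by
  classical
  -- basic order facts
  have lR : ∀ x y, R x y → lle x y := fun x y hxy =>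
    (hlle x y).2 (Relation.ReflTransGen.single hxy)
  have ltrans : ∀ x y z, lle x y → lle y z → lle x z := fun x y z h1 h2 =>
    (hlle x z).2 (((hlle x y).1 h1).trans ((hlle y z).1 h2))
  -- existence of chains
  have chainEx : ∀ x y, Relation.ReflTransGen R x y →
      ∃ (γ : ℕ → V) (n : ℕ), γ 0 = x ∧ γ n = y ∧ ∀ i < n, R (γ i) (γ (i + 1)) := by
    intro x y hxy
    induction hxy with
    | refl => exact ⟨fun _ => x, 0, rfl, rfl, fun i hi => absurd hi (by omega)⟩
    | @tail b c hab hbc ih =>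
      obtain ⟨γ, n, h0, hn, hstep⟩ := ih
      refine ⟨fun i => if i ≤ n then γ i else c, n + 1, ?_, ?_, ?_⟩
      · show (if 0 ≤ n then γ 0 else c) = x
        rw [if_pos (Nat.zero_le n)]; exact h0
      · show (if n + 1 ≤ n then γ (n + 1) else c) = c
        rw [if_neg (by omega : ¬ n + 1 ≤ n)]
      · intro i hi
        show R (if i ≤ n then γ i else c) (if i + 1 ≤ n then γ (i + 1) else c)
        by_cases hlt : i < n
        · rw [if_pos (le_of_lt hlt), if_pos (Nat.succ_le_of_lt hlt)]
          exact hstep i hlt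
        · have hieq : i = n := by omega
          rw [hieq, if_pos (le_refl n), if_neg (by omega : ¬ n + 1 ≤ n), hn]
          exact hbc
  have chainRTG : ∀ (γ : ℕ → V) (n : ℕ), (∀ i < n, R (γ i) (γ (i + 1))) →
      Relation.ReflTransGen R (γ 0) (γ n) := by
    intro γ n
    induction n with
    | zero => intro _; exact Relation.ReflTransGen.refl
    | succ n ih =>
      intro hstep
      exact (ih (fun i hi => hstep i (by omega))).tail (hstep n (by omega))
  have dzero : ∀ x, dd x x = 0 := fun x =>
    hdd (fun _ => x) 0 (fun i hi => absurd hi (by omega))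
  have dstepR : ∀ x z₀ z, lle x z₀ → R z₀ z → dd x z = dd x z₀ + 1 := by
    intro x z₀ z hx hR
    obtain ⟨γ, n, h0, hn, hstep⟩ := chainEx x z₀ ((hlle x z₀).1 hx)
    have hdn : dd x z₀ = n := by rw [← h0, ← hn]; exact hdd γ n hstep
    have hchain' : ∀ i < n + 1,
        R ((fun i => if i ≤ n then γ i else z) i) ((fun i => if i ≤ n then γ i else z) (i + 1)) := by
      intro i hi
      show R (if i ≤ n then γ i else z) (if i + 1 ≤ n then γ (i + 1) else z)
      by_cases hlt : i < n
      · rw [if_pos (le_of_lt hlt), if_pos (Nat.succ_le_of_lt hlt)]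
        exact hstep i hlt
      · have hieq : i = n := by omega
        rw [hieq, if_pos (le_refl n), if_neg (by omega : ¬ n + 1 ≤ n), hn]
        exact hR
    have hd := hdd (fun i => if i ≤ n then γ i else z) (n + 1) hchain'
    rw [if_pos (Nat.zero_le n), h0, if_neg (by omega : ¬ n + 1 ≤ n)] at hd
    omega
  have dstepL : ∀ z z₁ y, R z z₁ → lle z₁ y → dd z y = dd z₁ y + 1 := by
    intro z z₁ y hR hy
    obtain ⟨γ, n, h0, hn, hstep⟩ := chainEx z₁ y ((hlle z₁ y).1 hy)
    have hdn : dd z₁ y = n := by rw [← h0, ← hn]; exact hdd γ n hstep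
    have hchain' : ∀ i < n + 1,
        R ((fun i => if i = 0 then z else γ (i - 1)) i)
          ((fun i => if i = 0 then z else γ (i - 1)) (i + 1)) := by
      intro i hi
      show R (if i = 0 then z else γ (i - 1)) (if i + 1 = 0 then z else γ (i + 1 - 1))
      rcases Nat.eq_zero_or_pos i with h0i | h0i
      · subst h0i
        rw [if_pos rfl, if_neg (by omega : ¬ (0 : ℕ) + 1 = 0)]
        simpa [h0] using hR
      · rw [if_neg (by omega : ¬ i = 0), if_neg (by omega : ¬ i + 1 = 0),
          Nat.add_sub_cancel]
        have h' := hstep (i - 1) (by omega)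
        rwa [show i - 1 + 1 = i by omega] at h'
    have hd := hdd (fun i => if i = 0 then z else γ (i - 1)) (n + 1) hchain'
    rw [if_pos (rfl : (0 : ℕ) = 0), if_neg (by omega : ¬ n + 1 = 0), Nat.add_sub_cancel,
      hn] at hd
    omega
  have lastStep : ∀ x z, lle x z → x ≠ z → ∃ z₀, R z₀ z ∧ lle x z₀ := by
    intro x z hx hne
    obtain ⟨γ, n, h0, hn, hstep⟩ := chainEx x z ((hlle x z).1 hx)
    have hn0 : n ≠ 0 := by rintro rfl; exact hne (by rw [← h0, ← hn])
    refine ⟨γ (n - 1), ?_, ?_⟩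
    · have h' := hstep (n - 1) (by omega)
      rwa [show n - 1 + 1 = n by omega, hn] at h'
    · have h' := chainRTG γ (n - 1) (fun i hi => hstep i (by omega))
      rw [h0] at h'
      exact (hlle _ _).2 h'
  have firstStep : ∀ z y, lle z y → z ≠ y → ∃ z₁, R z z₁ ∧ lle z₁ y := by
    intro z y hz hne
    obtain ⟨γ, n, h0, hn, hstep⟩ := chainEx z y ((hlle z y).1 hz)
    have hn0 : n ≠ 0 := by rintro rfl; exact hne (by rw [← h0, ← hn])
    refine ⟨γ 1, ?_, ?_⟩
    · have h' := hstep 0 (by omega)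
      rwa [h0] at h'
    · have h' := chainRTG (fun i => γ (i + 1)) (n - 1) (fun i hi => by
        simpa using hstep (i + 1) (by omega))
      have h'' : Relation.ReflTransGen R (γ 1) (γ (n - 1 + 1)) := h'
      rw [show n - 1 + 1 = n by omega, hn] at h''
      exact (hlle _ _).2 h''
  have dposL : ∀ x z, lle x z → x ≠ z → dd x z ≠ 0 := by
    intro x z hx hne
    obtain ⟨z₀, hR, hx0⟩ := lastStep x z hx hne
    rw [dstepR x z₀ z hx0 hR]; omega
  have dposR : ∀ z y, lle z y → z ≠ y → dd z y ≠ 0 := by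
    intro z y hz hne
    obtain ⟨z₁, hR, hy1⟩ := firstStep z y hz hne
    rw [dstepL z z₁ y hR hy1]; omega
  -- derivative of monomials
  have monoD : ∀ (c : ℝ) (n : ℕ) (t : ℝ),
      HasDerivAt (fun s : ℝ => c * s ^ n / (n.factorial : ℝ))
        (if n = 0 then 0 else c * t ^ (n - 1) / ((n - 1).factorial : ℝ)) t := by
    intro c n t
    rcases Nat.eq_zero_or_pos n with rfl | hn
    · simp only [pow_zero, mul_one, Nat.factorial_zero, Nat.cast_one, if_pos rfl]
      exact hasDerivAt_const t (c / 1)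
    · have hder := ((hasDerivAt_pow n t).const_mul c).div_const (n.factorial : ℝ)
      rw [if_neg (by omega)]
      refine hder.congr_deriv ?_
      obtain ⟨m, rfl⟩ : ∃ m, n = m + 1 := ⟨n - 1, by omega⟩
      have h1 : ((m.factorial : ℕ) : ℝ) ≠ 0 := Nat.cast_ne_zero.mpr (Nat.factorial_ne_zero m)
      have h2 : ((m : ℝ) + 1) ≠ 0 := by positivity
      simp only [Nat.add_sub_cancel, Nat.factorial_succ, Nat.cast_mul, Nat.cast_add,
        Nat.cast_one]
      field_simp
  -- the derivatives of P and Q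
  set DP : ℝ → V → ℝ := fun t z => (1 / m1 z) *
      ∑ x, if lle x z ∧ x ≠ z then
        m2 x z * a x * t ^ (dd x z - 1) / ((dd x z - 1).factorial : ℝ) else 0
    with hDP
  set DQ : ℝ → V → ℝ := fun s z => (1 / m1 z) *
      ∑ y, if lle z y ∧ z ≠ y then
        m2 z y * b y * s ^ (dd z y - 1) / ((dd z y - 1).factorial : ℝ) else 0
    with hDQ
  have hPderiv : ∀ t z, HasDerivAt (fun s => P s z) (DP t z) t := by
    intro t z
    have hfun : (fun s => P s z) = fun s => (1 / m1 z) *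
        ∑ x, if lle x z then m2 x z * a x * s ^ (dd x z) / ((dd x z).factorial : ℝ) else 0 :=
      funext fun s => hP s z
    rw [hfun, hDP]
    refine HasDerivAt.const_mul _ (HasDerivAt.fun_sum ?_)
    intro x _
    by_cases hx : lle x z
    · simp only [if_pos hx]
      by_cases hxz : x = z
      · subst hxz
        rw [if_neg (by simp)]
        have h0 : dd x x = 0 := dzero x
        simp only [h0]
        simpa using monoD (m2 x x * a x) 0 t
      · rw [if_pos ⟨hx, hxz⟩]
        have hne := dposL x z hx hxz
        have h' := monoD (m2 x z * a x) (dd x z) t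
        rwa [if_neg hne] at h'
    · simp only [if_neg hx, if_neg (fun hc => hx (And.left hc) : ¬(lle x z ∧ x ≠ z))]
      exact hasDerivAt_const t 0
  have hQderiv : ∀ s z, HasDerivAt (fun u => Q u z) (DQ s z) s := by
    intro s z
    have hfun : (fun u => Q u z) = fun u => (1 / m1 z) *
        ∑ y, if lle z y then m2 z y * b y * u ^ (dd z y) / ((dd z y).factorial : ℝ) else 0 :=
      funext fun u => hQ u z
    rw [hfun, hDQ]
    refine HasDerivAt.const_mul _ (HasDerivAt.fun_sum ?_)
    intro y _
    by_cases hy : lle z y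
    · simp only [if_pos hy]
      by_cases hzy : z = y
      · subst hzy
        rw [if_neg (by simp)]
        have h0 : dd z z = 0 := dzero z
        simp only [h0]
        simpa using monoD (m2 z z * b z) 0 s
      · rw [if_pos ⟨hy, hzy⟩]
        have hne := dposR z y hy hzy
        have h' := monoD (m2 z y * b y) (dd z y) s
        rwa [if_neg hne] at h'
    · simp only [if_neg hy, if_neg (fun hc => hy (And.left hc) : ¬(lle z y ∧ z ≠ y))]
      exact hasDerivAt_const s 0
  have hQcomp : ∀ t z, HasDerivAt (fun s => Q (1 - s) z) (-(DQ (1 - t) z)) t := by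
    intro t z
    have h1 : HasDerivAt (fun s : ℝ => 1 - s) (-1) t := by
      simpa using (hasDerivAt_id t).const_sub (1 : ℝ)
    have h2 := (hQderiv (1 - t) z).comp t h1
    exact h2.congr_deriv (by ring)
  -- the key flux identities
  have keyP : ∀ t z, (∑ x, if R x z then me x z * P t x else 0)
      = ∑ x, if lle x z ∧ x ≠ z then
          m2 x z * a x * t ^ (dd x z - 1) / ((dd x z - 1).factorial : ℝ) else 0 := by
    intro t z
    have lhs_eq : (∑ z₀, if R z₀ z then me z₀ z * P t z₀ else 0)
        = ∑ z₀, ∑ x, if R z₀ z ∧ lle x z₀ then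
            (m2 x z₀ * me z₀ z / m1 z₀) * (a x * t ^ (dd x z₀) / ((dd x z₀).factorial : ℝ))
          else 0 := by
      apply Finset.sum_congr rfl
      intro z₀ _
      by_cases hz₀ : R z₀ z
      · rw [if_pos hz₀, hP, Finset.mul_sum, Finset.mul_sum]
        apply Finset.sum_congr rfl
        intro x _
        by_cases hx : lle x z₀
        · rw [if_pos hx, if_pos ⟨hz₀, hx⟩]; ring
        · rw [if_neg hx, if_neg (fun hc => hx (And.right hc) : ¬(R z₀ z ∧ lle x z₀)),
            mul_zero, mul_zero]
      · rw [if_neg hz₀]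
        symm
        apply Finset.sum_eq_zero
        intro x _
        rw [if_neg (fun hc => hz₀ (And.left hc) : ¬(R z₀ z ∧ lle x z₀))]
    rw [lhs_eq, Finset.sum_comm]
    apply Finset.sum_congr rfl
    intro x _
    by_cases hx : lle x z ∧ x ≠ z
    · rw [if_pos hx]
      have hdec := hdecompL x z hx.1 hx.2
      rw [show m2 x z * a x * t ^ (dd x z - 1) / ((dd x z - 1).factorial : ℝ)
          = (∑ z₀, if R z₀ z ∧ lle x z₀ then m2 x z₀ * me z₀ z / m1 z₀ else 0)
            * (a x * t ^ (dd x z - 1) / ((dd x z - 1).factorial : ℝ)) from by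
            rw [← hdec]; ring]
      rw [Finset.sum_mul]
      apply Finset.sum_congr rfl
      intro z₀ _
      by_cases hc : R z₀ z ∧ lle x z₀
      · rw [if_pos hc, if_pos hc]
        have hd : dd x z₀ = dd x z - 1 := by
          have := dstepR x z₀ z hc.2 hc.1; omega
        rw [hd]
      · rw [if_neg hc, if_neg hc, zero_mul]
    · rw [if_neg hx]
      apply Finset.sum_eq_zero
      intro z₀ _
      rw [if_neg]
      rintro ⟨hR, hxl⟩
      apply hx
      refine ⟨ltrans _ _ _ hxl (lR _ _ hR), ?_⟩
      rintro rfl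
      have hd := dstepR x z₀ x hxl hR
      rw [dzero x] at hd
      omega
  have keyQ : ∀ s z, (∑ y, if R z y then me z y * Q s y else 0)
      = ∑ y, if lle z y ∧ z ≠ y then
          m2 z y * b y * s ^ (dd z y - 1) / ((dd z y - 1).factorial : ℝ) else 0 := by
    intro s z
    have lhs_eq : (∑ z₁, if R z z₁ then me z z₁ * Q s z₁ else 0)
        = ∑ z₁, ∑ y, if R z z₁ ∧ lle z₁ y then
            (me z z₁ * m2 z₁ y / m1 z₁) * (b y * s ^ (dd z₁ y) / ((dd z₁ y).factorial : ℝ))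
          else 0 := by
      apply Finset.sum_congr rfl
      intro z₁ _
      by_cases hz₁ : R z z₁
      · rw [if_pos hz₁, hQ, Finset.mul_sum, Finset.mul_sum]
        apply Finset.sum_congr rfl
        intro y _
        by_cases hy : lle z₁ y
        · rw [if_pos hy, if_pos ⟨hz₁, hy⟩]; ring
        · rw [if_neg hy, if_neg (fun hc => hy (And.right hc) : ¬(R z z₁ ∧ lle z₁ y)),
            mul_zero, mul_zero]
      · rw [if_neg hz₁]
        symm
        apply Finset.sum_eq_zero
        intro y _
        rw [if_neg (fun hc => hz₁ (And.left hc) : ¬(R z z₁ ∧ lle z₁ y))]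
    rw [lhs_eq, Finset.sum_comm]
    apply Finset.sum_congr rfl
    intro y _
    by_cases hy : lle z y ∧ z ≠ y
    · rw [if_pos hy]
      have hdec := hdecompR z y hy.1 hy.2
      rw [show m2 z y * b y * s ^ (dd z y - 1) / ((dd z y - 1).factorial : ℝ)
          = (∑ z₁, if R z z₁ ∧ lle z₁ y then me z z₁ * m2 z₁ y / m1 z₁ else 0)
            * (b y * s ^ (dd z y - 1) / ((dd z y - 1).factorial : ℝ)) from by
            rw [← hdec]; ring]
      rw [Finset.sum_mul]
      apply Finset.sum_congr rfl
      intro z₁ _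
      by_cases hc : R z z₁ ∧ lle z₁ y
      · rw [if_pos hc, if_pos hc]
        have hd : dd z₁ y = dd z y - 1 := by
          have := dstepL z z₁ y hc.1 hc.2; omega
        rw [hd]
      · rw [if_neg hc, if_neg hc, zero_mul]
    · rw [if_neg hy]
      apply Finset.sum_eq_zero
      intro z₁ _
      rw [if_neg]
      rintro ⟨hR, hyl⟩
      apply hy
      refine ⟨ltrans _ _ _ (lR _ _ hR) hyl, ?_⟩
      rintro rfl
      have hd := dstepL z z₁ z hR hyl
      rw [dzero z] at hd
      omega
  have keyP2 : ∀ t z, (∑ x, if R x z then me x z * P t x else 0) = m1 z * DP t z := by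
    intro t z
    have hne : m1 z ≠ 0 := ne_of_gt (hm1pos z)
    rw [keyP t z, hDP]
    simp only
    rw [one_div, ← mul_assoc, mul_inv_cancel₀ hne, one_mul]
  have keyQ2 : ∀ s z, (∑ y, if R z y then me z y * Q s y else 0) = m1 z * DQ s z := by
    intro s z
    have hne : m1 z ≠ 0 := ne_of_gt (hm1pos z)
    rw [keyQ s z, hDQ]
    simp only
    rw [one_div, ← mul_assoc, mul_inv_cancel₀ hne, one_mul]
  -- part 1
  have part1 : ∀ t z, f t z = m1 z * P t z * Q (1 - t) z := by
    intro t z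
    have hm1ne : m1 z ≠ 0 := ne_of_gt (hm1pos z)
    have habc : ∀ (A B : ℝ), m1 z * ((1 / m1 z) * A) * ((1 / m1 z) * B) = A * B / m1 z := by
      intro A B; field_simp
    rw [hf, hP, hQ, habc, Finset.sum_mul_sum]
    simp only [Finset.sum_div]
    apply Finset.sum_congr rfl
    intro x _
    apply Finset.sum_congr rfl
    intro y _
    by_cases hx : lle x z
    · by_cases hy : lle z y
      · rw [if_pos (⟨hx, hy⟩ : lle x z ∧ lle z y), if_pos hx, if_pos hy]
        have hxy : lle x y := ltrans _ _ _ hx hy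
        have hm2ne : m2 x y ≠ 0 := ne_of_gt (hm2pos _ _ hxy)
        have hm3 : m3 x z y = m2 x z * m2 z y / m1 z := by
          rw [eq_div_iff hm1ne, mul_comm]
          exact hchain x z y hx hy
        have hf1 : ((dd x y).factorial : ℝ) ≠ 0 :=
          Nat.cast_ne_zero.mpr (Nat.factorial_ne_zero _)
        have hf2 : ((dd x z).factorial : ℝ) ≠ 0 :=
          Nat.cast_ne_zero.mpr (Nat.factorial_ne_zero _)
        have hf3 : ((dd z y).factorial : ℝ) ≠ 0 :=
          Nat.cast_ne_zero.mpr (Nat.factorial_ne_zero _)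
        rw [hm3]
        field_simp
      · rw [if_neg (fun hc => hy (And.right hc) : ¬(lle x z ∧ lle z y)), if_neg hy,
          mul_zero, zero_div]
    · rw [if_neg (fun hc => hx (And.left hc) : ¬(lle x z ∧ lle z y)), if_neg hx,
        zero_mul, zero_div]
  -- part 2
  have part2 : ∀ t z, HasDerivAt (fun s => f s z)
      (-((∑ y, if R z y then g t z y else 0) - ∑ x, if R x z then g t x z else 0)) t := by
    intro t z
    have hfun : (fun s => f s z) = fun s => m1 z * P s z * Q (1 - s) z :=
      funext fun s => part1 s z
    have hD := ((hPderiv t z).const_mul (m1 z)).mul (hQcomp t z)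
    have e1 : (∑ y, if R z y then g t z y else 0) = P t z * (m1 z * DQ (1 - t) z) := by
      rw [← keyQ2 (1 - t) z, Finset.mul_sum]
      apply Finset.sum_congr rfl
      intro y _
      by_cases hy : R z y
      · rw [if_pos hy, if_pos hy, hg, hm2edge _ _ hy]; ring
      · rw [if_neg hy, if_neg hy, mul_zero]
    have e2 : (∑ x, if R x z then g t x z else 0) = Q (1 - t) z * (m1 z * DP t z) := by
      rw [← keyP2 t z, Finset.mul_sum]
      apply Finset.sum_congr rfl
      intro x _
      by_cases hx : R x z
      · rw [if_pos hx, if_pos hx, hg, hm2edge _ _ hx]; ring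
      · rw [if_neg hx, if_neg hx, mul_zero]
    have heq : (-((∑ y, if R z y then g t z y else 0) - ∑ x, if R x z then g t x z else 0))
        = m1 z * DP t z * Q (1 - t) z + m1 z * P t z * -DQ (1 - t) z := by
      rw [e1, e2]; ring
    rw [hfun, heq]
    exact hD
  -- part 3
  have part3 : ∀ t x₀ x₁, R x₀ x₁ → HasDerivAt (fun s => g s x₀ x₁)
      (-((∑ x₂, if R x₁ x₂ then h t x₀ x₁ x₂ else 0) -
          ∑ z, if R z x₀ then h t z x₀ x₁ else 0)) t := by
    intro t x₀ x₁ hR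
    have hm0 : m1 x₀ ≠ 0 := ne_of_gt (hm1pos x₀)
    have hm1' : m1 x₁ ≠ 0 := ne_of_gt (hm1pos x₁)
    have hl01 : lle x₀ x₁ := lR _ _ hR
    have hfun : (fun s => g s x₀ x₁) = fun s => m2 x₀ x₁ * P s x₀ * Q (1 - s) x₁ :=
      funext fun s => hg s x₀ x₁
    have hD := ((hPderiv t x₀).const_mul (m2 x₀ x₁)).mul (hQcomp t x₁)
    have e1 : (∑ x₂, if R x₁ x₂ then h t x₀ x₁ x₂ else 0)
        = (m2 x₀ x₁ * P t x₀ / m1 x₁) *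
          (∑ x₂, if R x₁ x₂ then me x₁ x₂ * Q (1 - t) x₂ else 0) := by
      rw [Finset.mul_sum]
      apply Finset.sum_congr rfl
      intro x₂ _
      by_cases hx : R x₁ x₂
      · rw [if_pos hx, if_pos hx, hh]
        have hl12 : lle x₁ x₂ := lR _ _ hx
        have hm3 : m3 x₀ x₁ x₂ = m2 x₀ x₁ * m2 x₁ x₂ / m1 x₁ := by
          rw [eq_div_iff hm1', mul_comm]
          exact hchain x₀ x₁ x₂ hl01 hl12
        rw [hm3, hm2edge _ _ hx]
        ring
      · rw [if_neg hx, if_neg hx, mul_zero]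
    have e2 : (∑ z, if R z x₀ then h t z x₀ x₁ else 0)
        = (m2 x₀ x₁ * Q (1 - t) x₁ / m1 x₀) *
          (∑ z, if R z x₀ then me z x₀ * P t z else 0) := by
      rw [Finset.mul_sum]
      apply Finset.sum_congr rfl
      intro z _
      by_cases hz : R z x₀
      · rw [if_pos hz, if_pos hz, hh]
        have hlz0 : lle z x₀ := lR _ _ hz
        have hm3 : m3 z x₀ x₁ = m2 z x₀ * m2 x₀ x₁ / m1 x₀ := by
          rw [eq_div_iff hm0, mul_comm]
          exact hchain z x₀ x₁ hlz0 hl01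
        rw [hm3, hm2edge _ _ hz]
        ring
      · rw [if_neg hz, if_neg hz, mul_zero]
    have heq : (-((∑ x₂, if R x₁ x₂ then h t x₀ x₁ x₂ else 0) -
          ∑ z, if R z x₀ then h t z x₀ x₁ else 0))
        = m2 x₀ x₁ * DP t x₀ * Q (1 - t) x₁ + m2 x₀ x₁ * P t x₀ * -DQ (1 - t) x₁ := by
      rw [e1, e2, keyQ2 (1 - t) x₁, keyP2 t x₀]
      field_simp
      ring
    rw [hfun, heq]
    exact hD
  -- part 4
  have part4 : ∀ t x₀ x₁ x₂, R x₀ x₁ → R x₁ x₂ →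
      f t x₁ * h t x₀ x₁ x₂ = g t x₀ x₁ * g t x₁ x₂ := by
    intro t x₀ x₁ x₂ h01 h12
    rw [part1, hh, hg, hg]
    have hc := hchain x₀ x₁ x₂ (lR _ _ h01) (lR _ _ h12)
    linear_combination (P t x₀ * Q (1 - t) x₂ * P t x₁ * Q (1 - t) x₁) * hc
  exact ⟨part1, part2, part3, part4⟩
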